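/- Let X_t = (X_t^1,…,X_t^n) and X_{t'} = (X_{t'}^1,…,X_{t'}^n) be jointly distributed finite random vectors. Assume the k-th order synergy Syn^(k) and unique information Un^(k) satisfy: (non-negativity) Un^(k)(V;Y|X) ≥ 0; (source data-processing inequality) Un^(k)(W;Y|X) ≤ Un^(k)(Z;Y|X) whenever W−Z−(X,Y) is a Markov chain; and (self-unique identity, the paper's Lemma 3) Un^(k)(X;Y|X) = Syn^(k)(X;Y), where on the left the whole source vector X is treated as a single supervenient feature. Then the system has a causally emergent feature of order k if and only if Syn^(k)(X_t;X_{t'}) > 0; that is, there exists a supervenient feature V_t with Un^(k)(V_t;X_{t'}|X_t) > 0 if and only if Syn^(k)(X_t;X_{t'}) > 0. -/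
import Mathlib


/-!
Framework: finite probability.  A finite sample space `Ω` carries a probability
mass function `μ : Ω → ℝ`; random variables are functions on `Ω`.
-/

noncomputable section

open scoped BigOperators

attribute [local instance] Classical.propDecidable

variable {Ω : Type} [Fintype Ω]

/-- The probability that the random variable `f` takes the value `a`, under the pmf `μ`. -/
def prEq (μ : Ω → ℝ) {A : Type} (f : Ω → A) (a : A) : ℝ :=
  ∑ ω, if f ω = a then μ ω else 0

/-- `μ` is a probability mass function on the finite sample space `Ω`. -/
def IsPMF (μ : Ω → ℝ) : Prop :=
  (∀ ω, 0 ≤ μ ω) ∧ ∑ ω, μ ω = 1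

/-- The Markov chain `f − g − h`: `f` and `h` are conditionally independent given `g`. -/
def MarkovChain (μ : Ω → ℝ) {A B C : Type} (f : Ω → A) (g : Ω → B) (h : Ω → C) : Prop :=
  ∀ a b c,
    prEq μ (fun ω => (f ω, g ω, h ω)) (a, b, c) * prEq μ g b =
      prEq μ (fun ω => (f ω, g ω)) (a, b) * prEq μ (fun ω => (g ω, h ω)) (b, c)

/-- Statistical independence of two random variables. -/
def IndepRV (μ : Ω → ℝ) {A B : Type} (f : Ω → A) (g : Ω → B) : Prop :=
  ∀ a b, prEq μ (fun ω => (f ω, g ω)) (a, b) = prEq μ f a * prEq μ g b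

/-- Shannon mutual information `I(f;g)`. -/
def mutInfo (μ : Ω → ℝ) {A B : Type} (f : Ω → A) (g : Ω → B) : ℝ :=
  ∑ a ∈ Finset.univ.image f, ∑ b ∈ Finset.univ.image g,
    prEq μ (fun ω => (f ω, g ω)) (a, b) *
      Real.log (prEq μ (fun ω => (f ω, g ω)) (a, b) / (prEq μ f a * prEq μ g b))

/-- Conditional mutual information `I(f;g|h)`. -/
def condMutInfo (μ : Ω → ℝ) {A B C : Type} (f : Ω → A) (g : Ω → B) (h : Ω → C) : ℝ :=
  ∑ a ∈ Finset.univ.image f, ∑ b ∈ Finset.univ.image g, ∑ c ∈ Finset.univ.image h,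
    prEq μ (fun ω => (f ω, g ω, h ω)) (a, b, c) *
      Real.log ((prEq μ h c * prEq μ (fun ω => (f ω, g ω, h ω)) (a, b, c)) /
        (prEq μ (fun ω => (f ω, h ω)) (a, c) * prEq μ (fun ω => (g ω, h ω)) (b, c)))

/-- Conditional entropy `H(f|g)`. -/
def condEntropyRV (μ : Ω → ℝ) {A B : Type} (f : Ω → A) (g : Ω → B) : ℝ :=
  -∑ a ∈ Finset.univ.image f, ∑ b ∈ Finset.univ.image g,
    prEq μ (fun ω => (f ω, g ω)) (a, b) *
      Real.log (prEq μ (fun ω => (f ω, g ω)) (a, b) / prEq μ g b)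

/-- The sub-vector `X^α` of the random vector `X`, for a set of indices `α ⊆ [n]`. -/
def subvec {n : ℕ} {𝓧 : Fin n → Type} (X : Ω → ∀ i, 𝓧 i) (α : Finset (Fin n)) :
    Ω → ∀ i : α, 𝓧 i :=
  fun ω i => X ω i

/-- The collection of all subsets of `[n]` of cardinality `k`. -/
def kSets (n k : ℕ) : Finset (Finset (Fin n)) :=
  Finset.univ.filter fun α => α.card = k


private lemma prEq_ext {Ω : Type} [Fintype Ω] (μ : Ω → ℝ) {A B : Type}
    (f : Ω → A) (g : Ω → B) (a : A) (b : B) (h : ∀ ω, f ω = a ↔ g ω = b) :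
    prEq μ f a = prEq μ g b := by
  unfold prEq
  exact Finset.sum_congr rfl fun ω _ => if_congr (h ω) rfl rfl

private lemma prEq_zero {Ω : Type} [Fintype Ω] (μ : Ω → ℝ) {A : Type}
    (f : Ω → A) (a : A) (h : ∀ ω, f ω ≠ a) : prEq μ f a = 0 := by
  unfold prEq
  exact Finset.sum_eq_zero fun ω _ => if_neg (h ω)

/-!
STATEMENT 0.  A system has a causally emergent feature of order `k` iff
`Syn⁽ᵏ⁾(X_t; X_{t'}) > 0`.

Here `X = X_t` and `X' = X_{t'}` are jointly distributed finite random vectors with `n`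
components.  The abstract k-th order unique information `Un V f` stands for
`Un⁽ᵏ⁾(f ; X_{t'} | X_t)` (feature `f` with values in `V`, target `X_{t'}`, sources `X_t`),
and the real number `Syn` stands for `Syn⁽ᵏ⁾(X_t ; X_{t'})`.  The assumed properties are:
non-negativity, the source data-processing inequality (if `W − Z − (X_t, X_{t'})` is a
Markov chain then `Un(W) ≤ Un(Z)`), and the self-unique identity
`Un⁽ᵏ⁾(X_t ; X_{t'} | X_t) = Syn⁽ᵏ⁾(X_t ; X_{t'})` (the paper's Lemma 3).

A feature `f` is supervenient iff `f − X_t − X_{t'}` is a Markov chain, and causally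
emergent of order `k` iff moreover `Un(f) > 0`.
-/
theorem causal_emergence_iff_synergy_pos
    {Ω : Type} [Fintype Ω] (μ : Ω → ℝ) (hμ : IsPMF μ)
    {n : ℕ} {𝓧 𝓨 : Fin n → Type} [∀ i, Fintype (𝓧 i)] [∀ i, Fintype (𝓨 i)]
    (X : Ω → ∀ i, 𝓧 i) (X' : Ω → ∀ i, 𝓨 i)
    (k : ℕ)
    (Un : (V : Type) → (Ω → V) → ℝ)
    (Syn : ℝ)
    (hUn_nonneg : ∀ (V : Type) (f : Ω → V), 0 ≤ Un V f)
    (hUn_dpi : ∀ (W Z : Type) (f : Ω → W) (g : Ω → Z),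
      MarkovChain μ f g (fun ω => (X ω, X' ω)) → Un W f ≤ Un Z g)
    (hself : Un (∀ i, 𝓧 i) X = Syn) :
    (∃ (V : Type) (_ : Fintype V) (f : Ω → V),
        MarkovChain μ f X X' ∧ 0 < Un V f) ↔ 0 < Syn := by
  constructor
  · rintro ⟨V, _, f, hmc, hpos⟩
    have h2 : MarkovChain μ f X (fun ω => (X ω, X' ω)) := by
      rintro a b ⟨c1, c2⟩
      by_cases hc : c1 = b
      · subst hc
        have e1 : prEq μ (fun ω => (f ω, X ω, (X ω, X' ω))) (a, c1, (c1, c2))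
            = prEq μ (fun ω => (f ω, X ω, X' ω)) (a, c1, c2) := by
          apply prEq_ext
          intro ω
          constructor <;> (intro h; simp_all [Prod.ext_iff])
        have e2 : prEq μ (fun ω => (X ω, (X ω, X' ω))) (c1, (c1, c2))
            = prEq μ (fun ω => (X ω, X' ω)) (c1, c2) := by
          apply prEq_ext
          intro ω
          constructor <;> (intro h; simp_all [Prod.ext_iff])
        rw [e1, e2]
        exact hmc a c1 c2
      · have e1 : prEq μ (fun ω => (f ω, X ω, (X ω, X' ω))) (a, b, (c1, c2)) = 0 := by
          apply prEq_zero
          intro ω h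
          simp only [Prod.ext_iff] at h
          exact hc (h.2.2.1.symm.trans h.2.1)
        have e2 : prEq μ (fun ω => (X ω, (X ω, X' ω))) (b, (c1, c2)) = 0 := by
          apply prEq_zero
          intro ω h
          simp only [Prod.ext_iff] at h
          exact hc (h.2.1.symm.trans h.1)
        rw [e1, e2]
        ring
    have := hUn_dpi V (∀ i, 𝓧 i) f X h2
    rw [hself] at this
    exact lt_of_lt_of_le hpos this
  · intro hSyn
    refine ⟨∀ i, 𝓧 i, inferInstance, X, ?_, by rw [hself]; exact hSyn⟩
    intro a b c
    by_cases hab : a = b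
    · subst hab
      have e1 : prEq μ (fun ω => (X ω, X ω, X' ω)) (a, a, c)
          = prEq μ (fun ω => (X ω, X' ω)) (a, c) := by
        apply prEq_ext
        intro ω
        constructor <;> (intro h; simp_all [Prod.ext_iff])
      have e2 : prEq μ (fun ω => (X ω, X ω)) (a, a) = prEq μ X a := by
        apply prEq_ext
        intro ω
        constructor <;> (intro h; simp_all [Prod.ext_iff])
      rw [e1, e2]
      ring
    · have e1 : prEq μ (fun ω => (X ω, X ω, X' ω)) (a, b, c) = 0 := by
        apply prEq_zero
        intro ω h
        simp only [Prod.ext_iff] at h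
        exact hab (h.1.symm.trans h.2.1)
      have e2 : prEq μ (fun ω => (X ω, X ω)) (a, b) = 0 := by
        apply prEq_zero
        intro ω h
        simp only [Prod.ext_iff] at h
        exact hab (h.1.symm.trans h.2)
      rw [e1, e2]
      ring
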